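/- Let (G,σ) be a signed graph and let k, d be positive integers with 2d ≤ k. Then (G,σ) has a (2k, 2d)-coloring if and only if (G,σ) has a circular (k/d)-coloring. -/

import Mathlib

set_option maxHeartbeats 1000000


variable {V : Type*}

/-- A signature of a graph `G`: a symmetric function assigning `+1` or `-1` to each edge. -/
def IsSignature (G : SimpleGraph V) (σ : V → V → ℤ) : Prop :=
  (∀ v w, σ v w = σ w v) ∧ ∀ v w, G.Adj v w → σ v w = 1 ∨ σ v w = -1

/-- `c : V → ZMod k` is a `(k,d)`-coloring of the signed graph `(G,σ)`:
for every edge `vw`, `|c v - σ(vw) * c w|_k ≥ d`, where `|x|_k = min([x]_k, [-x]_k)`. -/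
def IsKDColoring (G : SimpleGraph V) (σ : V → V → ℤ) (k d : ℕ) (c : V → ZMod k) : Prop :=
  ∀ v w, G.Adj v w →
    d ≤ min (ZMod.val (c v - (σ v w : ZMod k) * c w))
            (ZMod.val (-(c v - (σ v w : ZMod k) * c w)))

/-- `(G,σ)` has a `(k,d)`-coloring (with the standing assumptions `k,d ≥ 1`, `k ≥ 2d`). -/
def HasKDColoring (G : SimpleGraph V) (σ : V → V → ℤ) (k d : ℕ) : Prop :=
  0 < k ∧ 0 < d ∧ 2 * d ≤ k ∧ ∃ c : V → ZMod k, IsKDColoring G σ k d c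

/-- The circular chromatic number of a signed graph: the infimum of `k/d` over all
pairs `(k,d)` for which a `(k,d)`-coloring exists. -/
noncomputable def chiC (G : SimpleGraph V) (σ : V → V → ℤ) : ℝ :=
  sInf { r : ℝ | ∃ k d : ℕ, HasKDColoring G σ k d ∧ r = (k : ℝ) / d }

/-- The chromatic number of a signed graph: the least `k` with a `(k,1)`-coloring. -/
noncomputable def chi (G : SimpleGraph V) (σ : V → V → ℤ) : ℕ :=
  sInf { k : ℕ | HasKDColoring G σ k 1 }

/-- A circular `r`-coloring of the signed graph `(G,σ)`: a map `f : V → [0,r)` such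
that for each edge `xy`, if `σ(xy) = 1` then `1 ≤ |f x - f y| ≤ r - 1`, and if
`σ(xy) = -1` then `1 ≤ |f x + f y - r| ≤ r - 1`. -/
def IsCircularColoring (G : SimpleGraph V) (σ : V → V → ℤ) (r : ℝ) (f : V → ℝ) : Prop :=
  (∀ v, 0 ≤ f v ∧ f v < r) ∧
  ∀ v w, G.Adj v w →
    (σ v w = 1 → 1 ≤ |f v - f w| ∧ |f v - f w| ≤ r - 1) ∧
    (σ v w = -1 → 1 ≤ |f v + f w - r| ∧ |f v + f w - r| ≤ r - 1)

noncomputable def rnd (t : ℝ) : ℤ := if Even ⌊t⌋ then ⌊t + 1/2⌋ else ⌈t - 1/2⌉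

lemma rnd_err (t : ℝ) :
    -(1/2) ≤ (rnd t : ℝ) - t ∧ (rnd t : ℝ) - t ≤ 1/2 ∧
      (((rnd t : ℝ) - t = 1/2 ∨ (rnd t : ℝ) - t = -(1/2)) → Odd (rnd t)) := by
  unfold rnd
  split_ifs with h
  · have h1 : (⌊t + 1/2⌋ : ℝ) ≤ t + 1/2 := Int.floor_le _
    have h2 : t + 1/2 - 1 < (⌊t + 1/2⌋ : ℝ) := by
      have := Int.lt_floor_add_one (t + 1/2); linarith
    refine ⟨by linarith, by linarith, ?_⟩
    rintro (ht | ht)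
    · have hft : ⌊t⌋ = ⌊t + 1/2⌋ - 1 := by
        rw [Int.floor_eq_iff]; push_cast; constructor <;> linarith
      rw [hft] at h
      rcases h with ⟨m, hm⟩
      exact ⟨m, by omega⟩
    · linarith
  · have h1 : t - 1/2 ≤ (⌈t - 1/2⌉ : ℝ) := Int.le_ceil _
    have h2 : (⌈t - 1/2⌉ : ℝ) < t - 1/2 + 1 := Int.ceil_lt_add_one _
    refine ⟨by linarith, by linarith, ?_⟩
    rintro (ht | ht)
    · linarith
    · have hft : ⌊t⌋ = ⌈t - 1/2⌉ := by
        rw [Int.floor_eq_iff]; constructor <;> linarith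
      rw [Int.not_even_iff_odd, hft] at h
      exact h

lemma key_window (D L U : ℤ) (T : ℝ) (hLe : Even L) (hUe : Even U)
    (h1 : (L : ℝ) ≤ |T|) (h2 : |T| ≤ (U : ℝ)) (h3 : |(D : ℝ) - T| ≤ 1)
    (h4 : |(D : ℝ) - T| = 1 → Even D) : L ≤ |D| ∧ |D| ≤ U := by
  have habs : |(D : ℝ)| = ((|D| : ℤ) : ℝ) := by push_cast; ring
  have t1 : |T| - |(D:ℝ)| ≤ |(D:ℝ) - T| := by
    have := abs_sub_abs_le_abs_sub T ((D:ℝ))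
    rwa [abs_sub_comm] at this
  have t2 : |(D:ℝ)| - |T| ≤ |(D:ℝ) - T| := abs_sub_abs_le_abs_sub _ _
  have hlow : (L : ℤ) - 1 ≤ |D| := by
    have : (L : ℝ) - 1 ≤ ((|D| : ℤ) : ℝ) := by rw [← habs]; linarith
    exact_mod_cast this
  have hhigh : |D| ≤ U + 1 := by
    have : ((|D| : ℤ) : ℝ) ≤ (U : ℝ) + 1 := by rw [← habs]; linarith
    exact_mod_cast this
  have hD : Even D → Even |D| := fun h => by
    rwa [Int.abs_eq_natAbs, Int.even_coe_nat, Int.natAbs_even]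
  have hne1 : |D| ≠ L - 1 := by
    intro he
    have heR : |(D:ℝ)| = (L:ℝ) - 1 := by rw [habs, he]; push_cast; ring
    have : |(D:ℝ) - T| = 1 := le_antisymm h3 (by linarith)
    have hEv := hD (h4 this)
    rw [he] at hEv
    rcases hLe with ⟨m, hm⟩; rcases hEv with ⟨p, hp⟩; omega
  have hne2 : |D| ≠ U + 1 := by
    intro he
    have heR : |(D:ℝ)| = (U:ℝ) + 1 := by rw [habs, he]; push_cast; ring
    have : |(D:ℝ) - T| = 1 := le_antisymm h3 (by linarith)
    have hEv := hD (h4 this)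
    rw [he] at hEv
    rcases hUe with ⟨m, hm⟩; rcases hEv with ⟨p, hp⟩; omega
  omega

lemma zmod_val_bound (n dd : ℕ) (hn : 0 < n) (hdd : 0 < dd) (D : ℤ)
    (h1 : (dd : ℤ) ≤ |D|) (h2 : |D| ≤ (n : ℤ) - dd) :
    dd ≤ ((D : ZMod n)).val ∧ dd ≤ (-(D : ZMod n)).val := by
  haveI : NeZero n := ⟨hn.ne'⟩
  have main : ∀ E : ℤ, 0 ≤ E → (dd : ℤ) ≤ E → E ≤ (n : ℤ) - dd →
      dd ≤ ((E : ZMod n)).val ∧ dd ≤ (-(E : ZMod n)).val := by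
    intro E hE0 hEl hEu
    obtain ⟨m, rfl⟩ : ∃ m : ℕ, (m : ℤ) = E := ⟨E.toNat, Int.toNat_of_nonneg hE0⟩
    have hml : dd ≤ m := by exact_mod_cast hEl
    have hmu : m ≤ n - dd := by omega
    have hmn : m < n := by omega
    have hcast : ((m : ℤ) : ZMod n) = ((m : ℕ) : ZMod n) := by push_cast; rfl
    rw [hcast]
    have hval : ((m : ℕ) : ZMod n).val = m := ZMod.val_cast_of_lt hmn
    have hne : ((m : ℕ) : ZMod n) ≠ 0 := by
      intro h0
      rw [h0, ZMod.val_zero] at hval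
      omega
    have hnegval : (-((m : ℕ) : ZMod n)).val = n - m := by
      rw [ZMod.neg_val, if_neg hne, hval]
    omega
  rcases le_or_gt 0 D with hD | hD
  · rw [abs_of_nonneg hD] at h1 h2
    exact main D hD h1 h2
  · rw [abs_of_neg hD] at h1 h2
    have := main (-D) (by omega) h1 h2
    rw [Int.cast_neg, neg_neg] at this
    exact ⟨this.2, this.1⟩


/-- A signed graph has a `(2k,2d)`-coloring if and only if it has a circular
`(k/d)`-coloring. -/
theorem hasKDColoring_iff_circular
    (G : SimpleGraph V) (σ : V → V → ℤ) (hσ : IsSignature G σ)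
    (k d : ℕ) (hk : 0 < k) (hd : 0 < d) (hkd : 2 * d ≤ k) :
    HasKDColoring G σ (2 * k) (2 * d) ↔ ∃ f : V → ℝ, IsCircularColoring G σ ((k : ℝ) / d) f := by
  constructor
  · rintro ⟨hn, hdd, hle, c, hc⟩
    haveI : NeZero (2*k) := ⟨by omega⟩
    have hdR : (0:ℝ) < d := by exact_mod_cast hd
    have hkR : (0:ℝ) < k := by exact_mod_cast hk
    have hkdR : 2*(d:ℝ) ≤ k := by exact_mod_cast hkd
    refine ⟨fun v => ((c v).val : ℝ) / (2*d), fun v => ?_, ?_⟩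
    · constructor
      · positivity
      · rw [div_lt_div_iff₀ (by positivity) hdR]
        have hv : ((c v).val : ℝ) < 2*k := by exact_mod_cast ZMod.val_lt (c v)
        nlinarith
    · intro v w hadj
      -- common setup
      have hAlt : ((c v).val : ℤ) < 2*k := by exact_mod_cast ZMod.val_lt (c v)
      have hBlt : ((c w).val : ℤ) < 2*k := by exact_mod_cast ZMod.val_lt (c w)
      have hA0 : (0:ℤ) ≤ ((c v).val : ℤ) := Int.natCast_nonneg _
      have hB0 : (0:ℤ) ≤ ((c w).val : ℤ) := Int.natCast_nonneg _
      set A : ℤ := ((c v).val : ℤ) with hA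
      set B : ℤ := ((c w).val : ℤ) with hB
      -- helper to extract val bounds for x
      have valbounds : ∀ x : ZMod (2*k), 2*d ≤ min x.val (-x).val →
          (2*d : ℤ) ≤ (x.val : ℤ) ∧ (x.val : ℤ) ≤ 2*k - 2*d := by
        intro x hx
        rw [le_min_iff] at hx
        have hxne : x ≠ 0 := by
          intro h0; rw [h0, ZMod.val_zero] at hx; omega
        have : (-x).val = 2*k - x.val := by rw [ZMod.neg_val, if_neg hxne]
        have hv := ZMod.val_lt x
        constructor <;> [exact_mod_cast hx.1; omega]
      have hcastv : (((c v).val : ℕ) : ZMod (2*k)) = c v := ZMod.natCast_rightInverse (c v)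
      have hcastw : (((c w).val : ℕ) : ZMod (2*k)) = c w := ZMod.natCast_rightInverse (c w)
      rcases hσ.2 v w hadj with h1 | h1
      · -- positive edge
        have hmin := hc v w hadj
        rw [h1] at hmin
        simp only [Int.cast_one, one_mul] at hmin
        obtain ⟨hX1, hX2⟩ := valbounds _ hmin
        set X : ℤ := (((c v - c w : ZMod (2*k)).val : ℕ) : ℤ) with hXdef
        have hcong : ((A - B - X : ℤ) : ZMod (2*k)) = 0 := by
          have hcx : (((c v - c w : ZMod (2*k)).val : ℕ) : ZMod (2*k)) = c v - c w :=
            ZMod.natCast_rightInverse _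
          rw [hA, hB, hXdef]
          push_cast
          rw [hcastv, hcastw, hcx]
          ring
        rw [ZMod.intCast_zmod_eq_zero_iff_dvd] at hcong
        obtain ⟨q, hq⟩ := hcong
        push_cast at hq
        have hq1 : q < 1 := by nlinarith
        have hq2 : -2 < q := by nlinarith
        have hAB : (2*d : ℤ) ≤ |A - B| ∧ |A - B| ≤ 2*k - 2*d := by
          have hq' : q = -1 ∨ q = 0 := by omega
          rcases abs_cases (A - B) with ⟨he, _⟩ | ⟨he, _⟩ <;> rcases hq' with rfl | rfl <;>
            rw [he] <;> omega
        constructor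
        · intro _
          have hdiff : ((c v).val : ℝ)/(2*d) - ((c w).val : ℝ)/(2*d) = ((A - B : ℤ) : ℝ)/(2*d) := by
            rw [hA, hB]; push_cast; ring
          rw [hdiff, abs_div, abs_of_pos (by positivity : (0:ℝ) < 2*(d:ℝ))]
          have habs1 : (2*(d:ℝ)) ≤ |((A - B : ℤ) : ℝ)| := by
            rw [← Int.cast_abs]; exact_mod_cast hAB.1
          have habs2 : |((A - B : ℤ) : ℝ)| ≤ 2*k - 2*d := by
            rw [← Int.cast_abs]; exact_mod_cast hAB.2
          constructor
          · rw [le_div_iff₀ (by positivity)]; linarith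
          · rw [div_le_iff₀ (by positivity)]
            have : ((k:ℝ)/d - 1) * (2*d) = 2*k - 2*d := by field_simp
            linarith [this]
        · intro hcon; rw [h1] at hcon; omega
      · -- negative edge
        have hmin := hc v w hadj
        rw [h1] at hmin
        simp only [Int.cast_neg, Int.cast_one, neg_mul, one_mul, sub_neg_eq_add] at hmin
        obtain ⟨hX1, hX2⟩ := valbounds _ hmin
        set X : ℤ := (((c v + c w : ZMod (2*k)).val : ℕ) : ℤ) with hXdef
        have hcong : ((A + B - X : ℤ) : ZMod (2*k)) = 0 := by
          have hcx : (((c v + c w : ZMod (2*k)).val : ℕ) : ZMod (2*k)) = c v + c w :=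
            ZMod.natCast_rightInverse _
          rw [hA, hB, hXdef]
          push_cast
          rw [hcastv, hcastw, hcx]
          ring
        rw [ZMod.intCast_zmod_eq_zero_iff_dvd] at hcong
        obtain ⟨q, hq⟩ := hcong
        push_cast at hq
        have hq1 : q < 2 := by nlinarith
        have hq2 : -1 < q := by nlinarith
        have hAB : (2*d : ℤ) ≤ |A + B - 2*k| ∧ |A + B - 2*k| ≤ 2*k - 2*d := by
          have hq' : q = 0 ∨ q = 1 := by omega
          rcases abs_cases (A + B - 2*k) with ⟨he, _⟩ | ⟨he, _⟩ <;> rcases hq' with rfl | rfl <;>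
            rw [he] <;> omega
        constructor
        · intro hcon; rw [h1] at hcon; omega
        · intro _
          have hdiff : ((c v).val : ℝ)/(2*d) + ((c w).val : ℝ)/(2*d) - (k:ℝ)/d
              = ((A + B - 2*k : ℤ) : ℝ)/(2*d) := by
            rw [hA, hB]; push_cast; field_simp
          rw [hdiff, abs_div, abs_of_pos (by positivity : (0:ℝ) < 2*(d:ℝ))]
          have habs1 : (2*(d:ℝ)) ≤ |((A + B - 2*k : ℤ) : ℝ)| := by
            rw [← Int.cast_abs]; exact_mod_cast hAB.1
          have habs2 : |((A + B - 2*k : ℤ) : ℝ)| ≤ 2*k - 2*d := by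
            rw [← Int.cast_abs]; exact_mod_cast hAB.2
          constructor
          · rw [le_div_iff₀ (by positivity)]; linarith
          · rw [div_le_iff₀ (by positivity)]
            have : ((k:ℝ)/d - 1) * (2*d) = 2*k - 2*d := by field_simp
            linarith [this]
  · rintro ⟨f, hf0, hfe⟩
    refine ⟨by omega, by omega, by omega, ?_⟩
    haveI : NeZero (2*k) := ⟨by omega⟩
    have hdR : (0:ℝ) < d := by exact_mod_cast hd
    have hkR : (0:ℝ) < k := by exact_mod_cast hk
    have h2k : 2*(d:ℝ)*((k:ℝ)/d) = 2*k := by field_simp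
    have hrm1 : 2*(d:ℝ) * ((k:ℝ)/d - 1) = 2*(k:ℝ) - 2*d := by field_simp
    refine ⟨fun v => ((rnd (2*d*f v) : ℤ) : ZMod (2*k)), fun v w hadj => ?_⟩
    obtain ⟨ea1, ea2, ea3⟩ := rnd_err (2*d*f v)
    obtain ⟨eb1, eb2, eb3⟩ := rnd_err (2*d*f w)
    set a : ℤ := rnd (2*d*f v) with ha
    set b : ℤ := rnd (2*d*f w) with hb
    rcases hσ.2 v w hadj with h1 | h1
    · -- positive edge
      obtain ⟨hu1, hu2⟩ := (hfe v w hadj).1 h1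
      set T : ℝ := 2*d*f v - 2*d*f w with hT
      have hTabs : |T| = 2*(d:ℝ) * |f v - f w| := by
        rw [hT, show 2*(d:ℝ)*f v - 2*d*f w = (2*d) * (f v - f w) by ring, abs_mul,
          abs_of_pos (by positivity : (0:ℝ) < 2*(d:ℝ))]
      set D : ℤ := a - b with hD
      have hDT : (D : ℝ) - T = ((a:ℝ) - 2*d*f v) - ((b:ℝ) - 2*d*f w) := by
        rw [hD, hT]; push_cast; ring
      have h3 : |(D:ℝ) - T| ≤ 1 := by
        rw [hDT]; rcases abs_cases (((a:ℝ) - 2*d*f v) - ((b:ℝ) - 2*d*f w)) with ⟨he, _⟩ | ⟨he, _⟩ <;>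
          rw [he] <;> linarith
      have h4 : |(D:ℝ) - T| = 1 → Even D := by
        intro heq
        rw [hDT] at heq
        have : ((a:ℝ) - 2*d*f v = 1/2 ∧ (b:ℝ) - 2*d*f w = -(1/2)) ∨
               ((a:ℝ) - 2*d*f v = -(1/2) ∧ (b:ℝ) - 2*d*f w = 1/2) := by
          rcases abs_cases (((a:ℝ) - 2*d*f v) - ((b:ℝ) - 2*d*f w)) with ⟨he, _⟩ | ⟨he, _⟩ <;>
            [left; right] <;> constructor <;> linarith
        rcases this with ⟨hx, hy⟩ | ⟨hx, hy⟩
        · exact (ea3 (Or.inl hx)).sub_odd (eb3 (Or.inr hy))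
        · exact (ea3 (Or.inr hx)).sub_odd (eb3 (Or.inl hy))
      have hKW := key_window D (2*d) (2*k - 2*d) T ⟨d, by ring⟩ ⟨(k:ℤ) - d, by ring⟩
        (by rw [hTabs]; push_cast; nlinarith)
        (by rw [hTabs]; push_cast; nlinarith) h3 h4
      have hzm := zmod_val_bound (2*k) (2*d) (by omega) (by omega) D hKW.1
        (by push_cast; omega)
      have hx : (fun v => ((rnd (2*d*f v) : ℤ) : ZMod (2*k))) v -
          ((σ v w : ℤ) : ZMod (2*k)) * (fun v => ((rnd (2*d*f v) : ℤ) : ZMod (2*k))) w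
          = ((D : ℤ) : ZMod (2*k)) := by
        simp only [h1, hD, ha, hb]
        push_cast
        ring
      rw [hx]
      exact le_min hzm.1 hzm.2
    · -- negative edge
      obtain ⟨hu1, hu2⟩ := (hfe v w hadj).2 h1
      set T : ℝ := 2*d*f v + 2*d*f w - 2*k with hT
      have hTabs : |T| = 2*(d:ℝ) * |f v + f w - (k:ℝ)/d| := by
        rw [hT, show 2*(d:ℝ)*f v + 2*d*f w - 2*k = (2*d) * (f v + f w - (k:ℝ)/d) by
          rw [mul_sub, h2k]; ring, abs_mul,
          abs_of_pos (by positivity : (0:ℝ) < 2*(d:ℝ))]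
      set D : ℤ := a + b - 2*k with hD
      have hDT : (D : ℝ) - T = ((a:ℝ) - 2*d*f v) + ((b:ℝ) - 2*d*f w) := by
        rw [hD, hT]; push_cast; ring
      have h3 : |(D:ℝ) - T| ≤ 1 := by
        rw [hDT]; rcases abs_cases (((a:ℝ) - 2*d*f v) + ((b:ℝ) - 2*d*f w)) with ⟨he, _⟩ | ⟨he, _⟩ <;>
          rw [he] <;> linarith
      have h4 : |(D:ℝ) - T| = 1 → Even D := by
        intro heq
        rw [hDT] at heq
        have : ((a:ℝ) - 2*d*f v = 1/2 ∧ (b:ℝ) - 2*d*f w = 1/2) ∨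
               ((a:ℝ) - 2*d*f v = -(1/2) ∧ (b:ℝ) - 2*d*f w = -(1/2)) := by
          rcases abs_cases (((a:ℝ) - 2*d*f v) + ((b:ℝ) - 2*d*f w)) with ⟨he, _⟩ | ⟨he, _⟩ <;>
            [left; right] <;> constructor <;> linarith
        have hev : Even (a + b) := by
          rcases this with ⟨hx, hy⟩ | ⟨hx, hy⟩
          · exact (ea3 (Or.inl hx)).add_odd (eb3 (Or.inl hy))
          · exact (ea3 (Or.inr hx)).add_odd (eb3 (Or.inr hy))
        rcases hev with ⟨m, hm⟩
        exact ⟨m - k, by omega⟩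
      have hKW := key_window D (2*d) (2*k - 2*d) T ⟨d, by ring⟩ ⟨(k:ℤ) - d, by ring⟩
        (by rw [hTabs]; push_cast; nlinarith)
        (by rw [hTabs]; push_cast; nlinarith) h3 h4
      have hzm := zmod_val_bound (2*k) (2*d) (by omega) (by omega) D hKW.1
        (by push_cast; omega)
      have hx : (fun v => ((rnd (2*d*f v) : ℤ) : ZMod (2*k))) v -
          ((σ v w : ℤ) : ZMod (2*k)) * (fun v => ((rnd (2*d*f v) : ℤ) : ZMod (2*k))) w
          = ((D : ℤ) : ZMod (2*k)) := by
        simp only [h1, hD, ha, hb]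
        push_cast
        have hzero : (2 : ZMod (2*k)) * ((k:ℕ) : ZMod (2*k)) = 0 := by
          have := ZMod.natCast_self (2*k); push_cast at this; exact this
        linear_combination hzero
      rw [hx]
      exact le_min hzm.1 hzm.2
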